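/- Let q be a power of 2, let m ≥ 3 be an odd integer all of whose prime divisors p satisfy ν₂(ord_p(q)) = i for a fixed i ≥ 1, and let n ≥ 1 be odd with ν₂(ord_n(q)) < i. Then the congruence q^x ≡ -1 (mod m) together with q^x ≡ 1 (mod n) has a common positive integer solution x. -/
import Mathlib

lemma aux_odd_iff_not_dvd (n : ℕ) : Odd n ↔ ¬ 2 ∣ n := by
  rw [Nat.odd_iff, Nat.two_dvd_ne_zero]

lemma aux_odd_ordCompl (t : ℕ) (ht : t ≠ 0) : Odd (ordCompl[2] t) :=
  (aux_odd_iff_not_dvd _).mpr (Nat.not_dvd_ordCompl Nat.prime_two ht)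

/-- Lifting: if `p ∣ a - 1` then `p^(k+1) ∣ a^(p^k) - 1`. -/
lemma aux_lift_pow (p : ℕ) (a : ℤ) (h : (p : ℤ) ∣ a - 1) (k : ℕ) :
    (p : ℤ) ^ (k + 1) ∣ a ^ p ^ k - 1 := by
  induction k with
  | zero => simpa using h
  | succ k ih =>
    have hb : (p : ℤ) ∣ a ^ p ^ k - 1 :=
      dvd_trans (dvd_pow_self (p : ℤ) (Nat.succ_ne_zero k)) ih
    have hsum : (p : ℤ) ∣ ∑ j ∈ Finset.range p, (a ^ p ^ k) ^ j := by
      have h2 : (p : ℤ) ∣ ∑ j ∈ Finset.range p, ((a ^ p ^ k) ^ j - 1) := by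
        apply Finset.dvd_sum
        intro j _
        exact dvd_trans hb (by simpa using sub_dvd_pow_sub_pow (a ^ p ^ k) 1 j)
      have h3 : ∑ j ∈ Finset.range p, ((a ^ p ^ k) ^ j - 1)
          = (∑ j ∈ Finset.range p, (a ^ p ^ k) ^ j) - (p : ℤ) := by
        rw [Finset.sum_sub_distrib]
        simp [Finset.card_range]
      rw [h3] at h2
      have := dvd_add h2 (dvd_refl (p : ℤ))
      simpa using this
    have hkey : (p : ℤ) ^ (k + 2) ∣
        (∑ j ∈ Finset.range p, (a ^ p ^ k) ^ j) * (a ^ p ^ k - 1) := by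
      have : (p : ℤ) ^ (k + 2) = (p : ℤ) * (p : ℤ) ^ (k + 1) := by ring
      rw [this]
      exact mul_dvd_mul hsum ih
    rw [geom_sum_mul] at hkey
    have hpow : (a ^ p ^ k) ^ p = a ^ p ^ (k + 1) := by
      rw [← pow_mul, ← pow_succ]
    rwa [hpow] at hkey

/-- Order modulo `p^k` divides order modulo `p` times `p^(k-1)`. -/
lemma aux_order_lift (p k q : ℕ) (hk : 1 ≤ k) :
    orderOf ((q : ZMod (p ^ k))) ∣ orderOf (q : ZMod p) * p ^ (k - 1) := by
  set r := orderOf (q : ZMod p) with hr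
  have h1 : ((q : ZMod p)) ^ r = 1 := pow_orderOf_eq_one _
  have h2 : (p : ℤ) ∣ (q : ℤ) ^ r - 1 := by
    have := (ZMod.intCast_zmod_eq_zero_iff_dvd ((q : ℤ) ^ r - 1) p).mp ?_
    · exact this
    · push_cast
      rw [h1]; ring
  have h3 := aux_lift_pow p ((q : ℤ) ^ r) h2 (k - 1)
  rw [Nat.sub_add_cancel hk] at h3
  apply orderOf_dvd_of_pow_eq_one
  have h4 : ((p ^ k : ℕ) : ℤ) ∣ (q : ℤ) ^ (r * p ^ (k - 1)) - 1 := by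
    push_cast
    rwa [pow_mul]
  have := (ZMod.intCast_zmod_eq_zero_iff_dvd ((q : ℤ) ^ (r * p ^ (k - 1)) - 1) (p ^ k)).mpr h4
  push_cast at this
  linear_combination this

/-- An element whose order is positive because some positive power is `1`. -/
lemma aux_orderOf_ne_zero (q N : ℕ) (hN : N ≠ 0) (h : Nat.Coprime q N) :
    orderOf (q : ZMod N) ≠ 0 := by
  have h1 : (q : ZMod N) ^ Nat.totient N = 1 := by
    have h2 := Nat.ModEq.pow_totient h
    have h3 := (ZMod.natCast_eq_natCast_iff _ _ _).mpr h2
    push_cast at h3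
    exact h3
  have h2 := orderOf_dvd_of_pow_eq_one h1
  intro h0
  rw [h0] at h2
  have := Nat.eq_zero_of_zero_dvd h2
  exact absurd this (Nat.totient_pos.mpr (Nat.pos_of_ne_zero hN)).ne'

/-- Key lemma at an odd prime power: if the order of `q` mod `p^k` has 2-adic
valuation `i ≥ 1`, then `p^k ∣ q^(2^(i-1)·c) + 1` for any odd multiple `c` of the
odd part of the order. -/
lemma aux_keyA (p k q i c : ℕ) (hp : p.Prime) (hpodd : Odd p)
    (hq : Nat.Coprime q (p ^ k)) (hi : 1 ≤ i)
    (hval : padicValNat 2 (orderOf (q : ZMod (p ^ k))) = i)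
    (hc : Odd c) (hdvd : ordCompl[2] (orderOf (q : ZMod (p ^ k))) ∣ c) :
    ((p : ℤ) ^ k) ∣ (q : ℤ) ^ (2 ^ (i - 1) * c) + 1 := by
  set t := orderOf (q : ZMod (p ^ k)) with htdef
  have hpk0 : (p : ℕ) ^ k ≠ 0 := pow_ne_zero k hp.pos.ne'
  have ht0 : t ≠ 0 := aux_orderOf_ne_zero q (p ^ k) hpk0 hq
  have hfac2 : t.factorization 2 = i := by
    rw [Nat.factorization_def t Nat.prime_two]; exact hval
  set u := ordCompl[2] t with hudef
  have hu : 2 ^ i * u = t := by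
    rw [hudef, ← hfac2]
    exact Nat.ordProj_mul_ordCompl_eq_self t 2
  have hu0 : u ≠ 0 := (Nat.ordCompl_pos 2 ht0).ne'
  have huodd : Odd u := aux_odd_ordCompl t ht0
  set Y : ℤ := (q : ℤ) ^ (2 ^ (i - 1) * u) with hYdef
  -- Y^2 ≡ 1
  have hYY : ((p : ℤ) ^ k) ∣ (Y - 1) * (Y + 1) := by
    have h1 : (q : ZMod (p ^ k)) ^ t = 1 := pow_orderOf_eq_one _
    have h2 : ((p ^ k : ℕ) : ℤ) ∣ (q : ℤ) ^ t - 1 := by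
      apply (ZMod.intCast_zmod_eq_zero_iff_dvd _ _).mp
      push_cast
      rw [h1]; ring
    have ht2 : 2 ^ (i - 1) * u * 2 = t := by
      rw [← hu]
      have h22 : 2 ^ (i - 1) * 2 = 2 ^ i := by
        rw [← pow_succ]
        congr 1
        omega
      rw [mul_right_comm, h22]
    have h3 : (Y - 1) * (Y + 1) = (q : ℤ) ^ t - 1 := by
      calc (Y - 1) * (Y + 1) = Y ^ 2 - 1 := by ring
        _ = (q : ℤ) ^ (2 ^ (i - 1) * u * 2) - 1 := by rw [hYdef, ← pow_mul]
        _ = (q : ℤ) ^ t - 1 := by rw [ht2]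
    rw [h3]
    exact_mod_cast h2
  -- Y ≢ 1
  have hYne : ¬ ((p : ℤ) ^ k ∣ Y - 1) := by
    intro hcon
    have h1 : (q : ZMod (p ^ k)) ^ (2 ^ (i - 1) * u) = 1 := by
      have h2 : ((p ^ k : ℕ) : ℤ) ∣ (q : ℤ) ^ (2 ^ (i - 1) * u) - 1 := by
        push_cast
        exact hcon
      have := (ZMod.intCast_zmod_eq_zero_iff_dvd ((q : ℤ) ^ (2 ^ (i - 1) * u) - 1) (p ^ k)).mpr h2
      push_cast at this
      linear_combination this
    have h2 : t ∣ 2 ^ (i - 1) * u := orderOf_dvd_of_pow_eq_one h1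
    have h3 : 2 ^ (i - 1) * u ≠ 0 := by positivity
    have h4 := Nat.le_of_dvd (Nat.pos_of_ne_zero h3) h2
    rw [← hu] at h4
    have h5 : 2 ^ (i - 1) < 2 ^ i := Nat.pow_lt_pow_right one_lt_two (by omega)
    have := Nat.mul_lt_mul_of_lt_of_le h5 (le_refl u) (Nat.pos_of_ne_zero hu0)
    omega
  have hpZ : Prime (p : ℤ) := Nat.prime_iff_prime_int.mp hp
  -- p^k ∣ Y + 1
  have hY1 : (p : ℤ) ^ k ∣ Y + 1 := by
    by_cases hcase : (p : ℤ) ∣ Y + 1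
    · -- then p does not divide Y - 1
      have hnd : ¬ (p : ℤ) ∣ Y - 1 := by
        intro hcon
        have : (p : ℤ) ∣ 2 := by
          have := dvd_sub hcase hcon
          simpa using this
        have h2 : (p : ℕ) ∣ 2 := by exact_mod_cast this
        have h3 : p = 2 := (Nat.prime_dvd_prime_iff_eq hp Nat.prime_two).mp h2
        rw [h3, Nat.odd_iff] at hpodd
        omega
      have hcop : IsCoprime ((p : ℤ) ^ k) (Y - 1) :=
        (IsCoprime.pow_left ((hpZ.coprime_iff_not_dvd).mpr hnd))
      exact hcop.dvd_of_dvd_mul_left hYY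
    · exfalso
      have hcop : IsCoprime ((p : ℤ) ^ k) (Y + 1) :=
        (IsCoprime.pow_left ((hpZ.coprime_iff_not_dvd).mpr hcase))
      exact hYne (hcop.dvd_of_dvd_mul_right hYY)
  -- conclude
  obtain ⟨d, hd⟩ := hdvd
  have hdodd : Odd d := by
    rw [hd, Nat.odd_mul] at hc
    exact hc.2
  have heq : (q : ℤ) ^ (2 ^ (i - 1) * c) = Y ^ d := by
    rw [hYdef, ← pow_mul, hd]
    ring
  rw [heq]
  have := Odd.add_dvd_pow_add_pow Y 1 hdodd
  simp only [one_pow] at this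
  exact dvd_trans hY1 this

theorem stmt_4 (q e m n i : ℕ) (hq : q = 2 ^ e)
    (hm : Odd m) (hm3 : 3 ≤ m) (hi : 1 ≤ i)
    (hmp : ∀ p : ℕ, p.Prime → p ∣ m → padicValNat 2 (orderOf (q : ZMod p)) = i)
    (hn : Odd n) (hn1 : 1 ≤ n)
    (hni : padicValNat 2 (orderOf (q : ZMod n)) < i) :
    ∃ x : ℕ, 0 < x ∧ (q : ZMod m) ^ x = -1 ∧ (q : ZMod n) ^ x = 1 := by
  have hm0 : m ≠ 0 := by omega
  have hn0 : n ≠ 0 := by omega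
  have hqcop : ∀ N : ℕ, Odd N → Nat.Coprime q N := by
    intro N hN
    rw [hq]
    exact Nat.Coprime.pow_left e hN.coprime_two_left
  -- facts at each prime of m
  have hfact : ∀ p ∈ m.primeFactors,
      p.Prime ∧ Odd p ∧ 1 ≤ m.factorization p ∧
      Nat.Coprime q (p ^ m.factorization p) ∧
      orderOf (q : ZMod (p ^ m.factorization p)) ≠ 0 ∧
      padicValNat 2 (orderOf (q : ZMod (p ^ m.factorization p))) = i := by
    intro p hpm
    have hp : p.Prime := Nat.prime_of_mem_primeFactors hpm
    have hpdvd : p ∣ m := Nat.dvd_of_mem_primeFactors hpm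
    have hpodd : Odd p := by
      rw [aux_odd_iff_not_dvd]
      intro h2
      exact ((aux_odd_iff_not_dvd m).mp hm) (dvd_trans h2 hpdvd)
    have hk : 1 ≤ m.factorization p := hp.factorization_pos_of_dvd hm0 hpdvd
    have hFodd : Odd (p ^ m.factorization p) := hpodd.pow
    have hcop : Nat.Coprime q (p ^ m.factorization p) := hqcop _ hFodd
    set k := m.factorization p with hkdef
    have hpk0 : p ^ k ≠ 0 := pow_ne_zero k hp.pos.ne'
    set t := orderOf (q : ZMod (p ^ k)) with htdef
    have ht0 : t ≠ 0 := aux_orderOf_ne_zero q (p ^ k) hpk0 hcop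
    -- r ∣ t
    set r := orderOf (q : ZMod p) with hrdef
    have hri : padicValNat 2 r = i := hmp p hp hpdvd
    have hrt : r ∣ t := by
      have hdvdpk : (p : ℕ) ∣ p ^ k := dvd_pow_self p (by omega)
      let f : ZMod (p ^ k) →+* ZMod p := ZMod.castHom hdvdpk (ZMod p)
      have h1 := orderOf_map_dvd f.toMonoidHom ((q : ZMod (p ^ k)))
      have h2 : f.toMonoidHom ((q : ZMod (p ^ k))) = (q : ZMod p) := by
        simp [f, map_natCast]
      rwa [h2] at h1
    have hr0 : r ≠ 0 := fun h0 => ht0 (Nat.eq_zero_of_zero_dvd (h0 ▸ hrt))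
    -- t ∣ r * p^(k-1)
    have htr : t ∣ r * p ^ (k - 1) := aux_order_lift p k q hk
    have hrp0 : r * p ^ (k - 1) ≠ 0 := Nat.mul_ne_zero hr0 (pow_ne_zero _ hp.pos.ne')
    -- valuations
    have hle1 : i ≤ padicValNat 2 t := by
      have := (Nat.factorization_le_iff_dvd hr0 ht0).mpr hrt
      have h2 := this 2
      rwa [Nat.factorization_def r Nat.prime_two, Nat.factorization_def t Nat.prime_two,
        hri] at h2
    have hle2 : padicValNat 2 t ≤ i := by
      have := (Nat.factorization_le_iff_dvd ht0 hrp0).mpr htr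
      have h2 := this 2
      rw [Nat.factorization_def t Nat.prime_two,
        Nat.factorization_mul hr0 (pow_ne_zero _ hp.pos.ne')] at h2
      simp only [Finsupp.coe_add, Pi.add_apply] at h2
      rw [Nat.factorization_def r Nat.prime_two, hri] at h2
      have hp2 : (p ^ (k - 1)).factorization 2 = 0 := by
        rw [Nat.Prime.factorization_pow hp]
        rw [Finsupp.single_apply]
        have : p ≠ 2 := by
          intro h
          rw [h, Nat.odd_iff] at hpodd
          omega
        simp [this]
      omega
    exact ⟨hp, hpodd, hk, hcop, ht0, le_antisymm hle2 hle1⟩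
  -- set up the exponent
  set dn := orderOf (q : ZMod n) with hdndef
  have hdn0 : dn ≠ 0 := aux_orderOf_ne_zero q n hn0 (hqcop n hn)
  set w := ordCompl[2] dn with hwdef
  have hwodd : Odd w := aux_odd_ordCompl dn hdn0
  set W := ∏ p ∈ m.primeFactors, ordCompl[2] (orderOf (q : ZMod (p ^ m.factorization p)))
    with hWdef
  have hWodd : Odd W := by
    rw [hWdef]
    apply Finset.prod_induction _ Odd (fun a b => Odd.mul) odd_one
    intro p hpm
    obtain ⟨hp, hpodd, hk, hcop, ht0, hval⟩ := hfact p hpm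
    exact aux_odd_ordCompl _ ht0
  set s := w * W with hsdef
  have hsodd : Odd s := hwodd.mul hWodd
  have hs0 : s ≠ 0 := by
    intro h0
    rw [h0] at hsodd
    simp [Nat.odd_iff] at hsodd
  refine ⟨2 ^ (i - 1) * s, by positivity, ?_, ?_⟩
  · -- mod m
    have hdvd : (m : ℤ) ∣ (q : ℤ) ^ (2 ^ (i - 1) * s) + 1 := by
      have hmeq : ∏ p ∈ m.primeFactors, p ^ m.factorization p = m := by
        have := Nat.factorization_prod_pow_eq_self hm0
        rwa [Finsupp.prod, Nat.support_factorization] at this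
      rw [← hmeq]
      push_cast
      apply Finset.prod_dvd_of_coprime
      · intro a ha b hb hab
        have hpa := Nat.prime_of_mem_primeFactors ha
        have hpb := Nat.prime_of_mem_primeFactors hb
        have : Nat.Coprime a b := (Nat.coprime_primes hpa hpb).mpr hab
        exact (IsCoprime.pow (Nat.Coprime.isCoprime this))
      · intro p hpm
        obtain ⟨hp, hpodd, hk, hcop, ht0, hval⟩ := hfact p hpm
        apply aux_keyA p (m.factorization p) q i s hp hpodd hcop hi hval hsodd
        calc ordCompl[2] (orderOf (q : ZMod (p ^ m.factorization p)))
            ∣ W := Finset.dvd_prod_of_mem _ hpm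
          _ ∣ s := dvd_mul_left W w
    have h1 := (ZMod.intCast_zmod_eq_zero_iff_dvd ((q : ℤ) ^ (2 ^ (i - 1) * s) + 1) m).mpr hdvd
    push_cast at h1
    linear_combination h1
  · -- mod n
    apply orderOf_dvd_iff_pow_eq_one.mp
    have hdn : 2 ^ (padicValNat 2 dn) * w = dn := by
      have := Nat.ordProj_mul_ordCompl_eq_self dn 2
      rwa [Nat.factorization_def dn Nat.prime_two] at this
    rw [← hdndef, ← hdn]
    apply mul_dvd_mul
    · exact pow_dvd_pow 2 (by omega)
    · exact Dvd.intro W rfl
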